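/- Let 𝒳 be a real Hilbert space and ρ : 𝒳 → [0,∞) a continuous seminorm. For every f ∈ 𝒳, setting f₀ = f − P_{K_ρ} f where P_{K_ρ} is the orthogonal projection onto K_ρ, the set of minimizers over 𝒳 of x ↦ ρ(f − x) + ρ*(x) is equal to the set of minimizers over G of x ↦ ρ_G(f₀ − x) + ρ_G*(x). -/

import Mathlib

/-- Let `𝒳` be a real Hilbert space and `ρ : 𝒳 → [0,∞)` a continuous
seminorm. Let `K` be the subspace `K_ρ = {x | ρ x = 0}` and `G = Kᗮ`. For `f ∈ 𝒳`,
set `f₀ = f − P_K f` (characterized by `f₀ ∈ Kᗮ` and `f − f₀ ∈ K`). Then the set of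
minimizers over `𝒳` of `x ↦ ρ(f − x) + ρ*(x)` equals the set of minimizers over `G`
of `x ↦ ρ_G(f₀ − x) + ρ_G*(x)` (values in `EReal`; `ρ_G` is the restriction of `ρ`
to `G` and `ρ_G*` is its Legendre transform, the supremum being taken over `G`). -/
theorem stmt_3 {𝒳 : Type*} [NormedAddCommGroup 𝒳] [InnerProductSpace ℝ 𝒳] [CompleteSpace 𝒳]
    (ρ : 𝒳 → ℝ) (hρ_nonneg : ∀ x, 0 ≤ ρ x)
    (hρ_add : ∀ x y, ρ (x + y) ≤ ρ x + ρ y)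
    (hρ_smul : ∀ (c : ℝ) (x : 𝒳), ρ (c • x) = |c| * ρ x)
    (hρ_cont : Continuous ρ)
    (K : Submodule ℝ 𝒳) (hK : (K : Set 𝒳) = {x : 𝒳 | ρ x = 0})
    (f f₀ : 𝒳) (hf₀ : f₀ ∈ Kᗮ) (hproj : f - f₀ ∈ K) :
    {x : 𝒳 | ∀ z : 𝒳,
        (↑(ρ (f - x)) : EReal) + (⨆ w : 𝒳, (((inner ℝ x w : ℝ) - ρ w : ℝ) : EReal))
          ≤ (↑(ρ (f - z)) : EReal) + (⨆ w : 𝒳, (((inner ℝ z w : ℝ) - ρ w : ℝ) : EReal))}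
      = {x : 𝒳 | x ∈ Kᗮ ∧ ∀ z ∈ Kᗮ,
          (↑(ρ (f₀ - x)) : EReal)
              + (⨆ w : Kᗮ, (((inner ℝ x (w : 𝒳) : ℝ) - ρ (w : 𝒳) : ℝ) : EReal))
            ≤ (↑(ρ (f₀ - z)) : EReal)
              + (⨆ w : Kᗮ, (((inner ℝ z (w : 𝒳) : ℝ) - ρ (w : 𝒳) : ℝ) : EReal))} := by
  -- elements of K have ρ = 0
  have h0 : ∀ k ∈ K, ρ k = 0 := by
    intro k hk
    have : k ∈ (K : Set 𝒳) := hk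
    rw [hK] at this
    exact this
  -- ρ is invariant under adding elements of K
  have hinv : ∀ (a k : 𝒳), k ∈ K → ρ (a + k) = ρ a := by
    intro a k hk
    apply le_antisymm
    · have := hρ_add a k; rwa [h0 k hk, add_zero] at this
    · have h1 := hρ_add (a + k) (-k)
      have hnk : ρ (-k) = 0 := h0 _ (neg_mem hk)
      rw [hnk, add_zero, add_neg_cancel_right] at h1
      exact h1
  -- K is closed, hence has orthogonal projections
  have hKc : IsClosed (K : Set 𝒳) := by
    rw [hK]
    exact isClosed_eq hρ_cont continuous_const
  haveI : CompleteSpace K := hKc.completeSpace_coe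
  -- ρ(f - x) = ρ(f₀ - x)
  have hρf : ∀ x : 𝒳, ρ (f - x) = ρ (f₀ - x) := by
    intro x
    have : f - x = (f₀ - x) + (f - f₀) := by abel
    rw [this, hinv _ _ hproj]
  -- for x ∈ Kᗮ, the two suprema agree
  have hsup_eq : ∀ x ∈ Kᗮ,
      (⨆ w : 𝒳, (((inner ℝ x w : ℝ) - ρ w : ℝ) : EReal))
        = ⨆ w : Kᗮ, (((inner ℝ x (w : 𝒳) : ℝ) - ρ (w : 𝒳) : ℝ) : EReal) := by
    intro x hx
    apply le_antisymm
    · apply iSup_le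
      intro w
      set w' : 𝒳 := w - (K.orthogonalProjectionOnto w : 𝒳) with hw'def
      have hw' : w' ∈ Kᗮ := K.sub_starProjection_mem_orthogonal w
      have hmemK : w - w' ∈ K := by
        simp only [hw'def, sub_sub_cancel]
        exact (K.orthogonalProjectionOnto w).2
      have hip : (inner ℝ x w : ℝ) = inner ℝ x w' := by
        have h1 : (inner ℝ x (w - w') : ℝ) = 0 := by
          rw [real_inner_comm]
          exact hx _ hmemK
        have h2 : (inner ℝ x w : ℝ) = inner ℝ x w' + inner ℝ x (w - w') := by
          rw [← inner_add_right]
          congr 1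
          abel
        rw [h2, h1, add_zero]
      have hρw : ρ w = ρ w' := by
        have : w = w' + (w - w') := by abel
        rw [this, hinv _ _ hmemK]
      calc (((inner ℝ x w : ℝ) - ρ w : ℝ) : EReal)
          = ((fun v : Kᗮ => (((inner ℝ x (v : 𝒳) : ℝ) - ρ (v : 𝒳) : ℝ) : EReal)) ⟨w', hw'⟩) := by
            rw [hip, hρw]
        _ ≤ _ := le_iSup (fun v : Kᗮ => (((inner ℝ x (v : 𝒳) : ℝ) - ρ (v : 𝒳) : ℝ) : EReal)) (⟨w', hw'⟩ : Kᗮ)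
    · apply iSup_le
      intro w
      exact le_iSup (fun v : 𝒳 => (((inner ℝ x v : ℝ) - ρ v : ℝ) : EReal)) (w : 𝒳)
  -- for x ∉ Kᗮ, the supremum over 𝒳 is ⊤
  have hsup_top : ∀ x : 𝒳, x ∉ Kᗮ →
      (⨆ w : 𝒳, (((inner ℝ x w : ℝ) - ρ w : ℝ) : EReal)) = ⊤ := by
    intro x hx
    rw [iSup_eq_top]
    intro b hb
    rw [Submodule.mem_orthogonal] at hx
    push_neg at hx
    obtain ⟨u, hu, hdu⟩ := hx
    have hd : (inner ℝ x u : ℝ) ≠ 0 := by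
      rw [real_inner_comm]; exact hdu
    obtain ⟨r, hbr, -⟩ := EReal.exists_between_coe_real hb
    refine ⟨(r / inner ℝ x u) • u, ?_⟩
    have h1 : (inner ℝ x ((r / inner ℝ x u) • u) : ℝ) = r := by
      rw [real_inner_smul_right, div_mul_cancel₀ _ hd]
    have h2 : ρ ((r / inner ℝ x u) • u) = 0 := by
      rw [hρ_smul, h0 u hu, mul_zero]
    rw [h1, h2, sub_zero]
    exact hbr
  -- the value at 0 is finite
  have hsup0 : (⨆ w : 𝒳, (((inner ℝ (0 : 𝒳) w : ℝ) - ρ w : ℝ) : EReal)) ≤ 0 := by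
    apply iSup_le
    intro w
    have : ((inner ℝ (0 : 𝒳) w : ℝ) - ρ w : ℝ) ≤ 0 := by
      rw [inner_zero_left, zero_sub]
      exact neg_nonpos.2 (hρ_nonneg w)
    exact_mod_cast this
  ext x
  simp only [Set.mem_setOf_eq]
  constructor
  · intro hmin
    have hxG : x ∈ Kᗮ := by
      by_contra hx
      have h1 := hmin 0
      rw [hsup_top x hx] at h1
      have h2 : (↑(ρ (f - x)) : EReal) + ⊤ = ⊤ := EReal.add_top_of_ne_bot (EReal.coe_ne_bot _)
      rw [h2] at h1
      have h3 : (↑(ρ (f - 0)) : EReal) + (⨆ w : 𝒳, (((inner ℝ (0:𝒳) w : ℝ) - ρ w : ℝ) : EReal))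
          ≤ (↑(ρ (f - 0)) : EReal) + 0 := by
        exact add_le_add_right hsup0 _
      rw [add_zero] at h3
      have := le_trans h1 h3
      exact absurd (top_le_iff.1 this) (EReal.coe_ne_top _)
    refine ⟨hxG, ?_⟩
    intro z hz
    have := hmin z
    rwa [hsup_eq x hxG, hsup_eq z hz, hρf x, hρf z] at this
  · rintro ⟨hxG, hmin⟩
    intro z
    by_cases hz : z ∈ Kᗮ
    · have := hmin z hz
      rwa [← hsup_eq x hxG, ← hsup_eq z hz, ← hρf x, ← hρf z] at this
    · rw [hsup_top z hz, EReal.add_top_of_ne_bot (EReal.coe_ne_bot _)]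
      exact le_top
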